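/- For every coding scheme (i.e., all choices of encoder matrices E^{(1,3)}, E^{(1,5)}, E^{(2,4)}, E^{(2,5)}, E^{(5,6)} and decoder matrices D^{(3)}, D^{(4)}), the total loss satisfies L_total ≥ L_lb, where L_lb = Σ_{i∈{3,4}} Σ_{j=2Z+1}^{n} μ^{(i)}_j. -/

import Mathlib

open Matrix

/- ### Auxiliary lemmas -/

lemma diag_self_mul_transpose_nonneg {α β : Type*} [Fintype β] (Y : Matrix α β ℝ) (j : α) :
    0 ≤ (Y * Yᵀ) j j := by
  simp only [Matrix.mul_apply, Matrix.transpose_apply]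
  exact Finset.sum_nonneg fun i _ => mul_self_nonneg _

lemma diag_transpose_mul_self_nonneg {α β : Type*} [Fintype α] (Y : Matrix α β ℝ) (j : β) :
    0 ≤ (Yᵀ * Y) j j := by
  simpa using diag_self_mul_transpose_nonneg Yᵀ j

lemma trace_self_mul_transpose_nonneg {α β : Type*} [Fintype α] [Fintype β] (Y : Matrix α β ℝ) :
    0 ≤ (Y * Yᵀ).trace := by
  rw [Matrix.trace]
  exact Finset.sum_nonneg fun j _ => diag_self_mul_transpose_nonneg Y j

lemma exists_orthonormal_ker {n : ℕ} {ι : Type} [Fintype ι]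
    (N : Matrix ι (Fin n) ℝ) :
    ∃ (d : ℕ) (V : Matrix (Fin d) (Fin n) ℝ),
      n ≤ d + Fintype.card ι ∧ V * Vᵀ = 1 ∧ N * Vᵀ = 0 := by
  classical
  set K : Submodule ℝ (EuclideanSpace ℝ (Fin n)) :=
    (LinearMap.ker N.mulVecLin).comap (WithLp.linearEquiv 2 ℝ (Fin n → ℝ)).toLinearMap with hK
  have hfin : Module.finrank ℝ K = Module.finrank ℝ (LinearMap.ker N.mulVecLin) := by
    rw [hK, Submodule.comap_equiv_eq_map_symm]
    exact (LinearEquiv.finrank_map_eq _ _)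
  have hrn := LinearMap.finrank_range_add_finrank_ker (N.mulVecLin)
  have hrank : Module.finrank ℝ (LinearMap.range N.mulVecLin) ≤ Fintype.card ι := by
    have := N.rank_le_card_height
    simpa [Matrix.rank] using this
  have hd : n ≤ Module.finrank ℝ K + Fintype.card ι := by
    rw [hfin]
    have hn : Module.finrank ℝ (Fin n → ℝ) = n := Module.finrank_fin_fun ℝ
    omega
  have key : ∃ v : Fin (Module.finrank ℝ K) → (Fin n → ℝ),
      (∀ i j, dotProduct (v i) (v j) = if i = j then 1 else 0) ∧
      (∀ i, N.mulVec (v i) = 0) := by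
    have b := stdOrthonormalBasis ℝ K
    refine ⟨fun i => WithLp.equiv 2 (Fin n → ℝ) (b i : EuclideanSpace ℝ (Fin n)), ?_, ?_⟩
    · intro i j
      have hon := b.orthonormal
      rw [orthonormal_iff_ite] at hon
      have h1 := hon i j
      rw [Submodule.coe_inner, EuclideanSpace.inner_eq_star_dotProduct, dotProduct_comm] at h1
      simpa using h1
    · intro i
      have hmem : (b i : EuclideanSpace ℝ (Fin n)) ∈ K := (b i).2
      exact LinearMap.mem_ker.mp (Submodule.mem_comap.mp hmem)
  obtain ⟨v, hv1, hv2⟩ := key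
  refine ⟨Module.finrank ℝ K, Matrix.of v, hd, ?_, ?_⟩
  · ext i k
    simpa [Matrix.mul_apply, Matrix.one_apply, dotProduct] using hv1 i k
  · ext k i
    have := congrFun (hv2 i) k
    simpa [Matrix.mul_apply, Matrix.mulVec, dotProduct] using this

lemma mu_antitone (μ : ℕ → ℝ) (n : ℕ) (hdesc : ∀ i, 1 ≤ i → i < n → μ (i+1) ≤ μ i) :
    ∀ p q, 1 ≤ p → p ≤ q → q ≤ n → μ q ≤ μ p := by
  intro p q hp hpq hqn
  induction q with
  | zero => omega
  | succ k ih =>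
    rcases Nat.lt_or_ge p (k+1) with h | h
    · exact le_trans (hdesc k (by omega) (by omega)) (ih (by omega) (by omega))
    · have : p = k + 1 := by omega
      rw [this]

lemma sum_Icc_shift (μ : ℕ → ℝ) (r n : ℕ) :
    ∑ j ∈ Finset.Icc (r+1) n, μ j = ∑ j ∈ Finset.range n, (if r ≤ j then μ (j+1) else 0) := by
  rw [← Finset.sum_filter]
  have h : (Finset.range n).filter (fun j => r ≤ j) = Finset.Ico r n := by
    ext x; simp only [Finset.mem_filter, Finset.mem_range, Finset.mem_Ico]; omega
  rw [h, ← Finset.Ico_add_one_right_eq_Icc]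
  have h2 : Finset.Ico (r+1) (n+1) = Finset.image (· + 1) (Finset.Ico r n) := by
    rw [Finset.image_add_right_Ico]
  rw [h2, Finset.sum_image (by intro x _ y _ hxy; exact Nat.add_right_cancel hxy)]

lemma comb_ineq {n d r : ℕ} (μ : ℕ → ℝ) (t : Fin n → ℝ)
    (hdesc : ∀ i, 1 ≤ i → i < n → μ (i+1) ≤ μ i)
    (hmu : ∀ j : Fin n, 0 ≤ μ ((j:ℕ)+1))
    (ht0 : ∀ j, 0 ≤ t j) (ht1 : ∀ j, t j ≤ 1)
    (htsum : ∑ j : Fin n, t j = (d:ℝ)) (hd : n ≤ d + r) :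
    ∑ j ∈ Finset.Icc (r+1) n, μ j ≤ ∑ j : Fin n, μ ((j:ℕ)+1) * t j := by
  rw [sum_Icc_shift, ← Fin.sum_univ_eq_sum_range (fun j => if r ≤ j then μ (j+1) else 0) n]
  by_cases hrn : r < n
  · have hc0 : 0 ≤ μ (r+1) := hmu ⟨r, hrn⟩
    have hperterm : ∀ j : Fin n,
        (if r ≤ (j:ℕ) then μ ((j:ℕ)+1) else 0)
          + μ (r+1) * (t j - (if r ≤ (j:ℕ) then 1 else 0))
          ≤ μ ((j:ℕ)+1) * t j := by
      intro j
      by_cases hj : r ≤ (j:ℕ)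
      · have hle : μ ((j:ℕ)+1) ≤ μ (r+1) :=
          mu_antitone μ n hdesc (r+1) ((j:ℕ)+1) (by omega) (by omega) (by omega)
        have h1 := ht1 j
        simp only [hj, if_true]
        nlinarith
      · have hge : μ (r+1) ≤ μ ((j:ℕ)+1) :=
          mu_antitone μ n hdesc ((j:ℕ)+1) (r+1) (by omega) (by omega) (by omega)
        have h0 := ht0 j
        simp only [hj, if_false]
        nlinarith
    have hcnt : ∑ j : Fin n, (if r ≤ (j:ℕ) then (1:ℝ) else 0) = ((n - r : ℕ) : ℝ) := by
      rw [Fin.sum_univ_eq_sum_range (fun j => if r ≤ j then (1:ℝ) else 0) n,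
        Finset.sum_boole]
      have h : (Finset.range n).filter (fun j => r ≤ j) = Finset.Ico r n := by
        ext x; simp only [Finset.mem_filter, Finset.mem_range, Finset.mem_Ico]; omega
      rw [h, Nat.card_Ico]
    have hsum_le := Finset.sum_le_sum (fun j (_ : j ∈ Finset.univ) => hperterm j)
    rw [Finset.sum_add_distrib, ← Finset.mul_sum, Finset.sum_sub_distrib, htsum, hcnt]
      at hsum_le
    have hdge : ((n - r : ℕ) : ℝ) ≤ (d : ℝ) := by
      have : (n - r : ℕ) ≤ d := by omega
      exact_mod_cast this
    nlinarith
  · have h0 : ∑ j : Fin n, (if r ≤ (j:ℕ) then μ ((j:ℕ)+1) else 0) = 0 := by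
      apply Finset.sum_eq_zero
      intro j _
      have : ¬ (r ≤ (j:ℕ)) := by omega
      simp [this]
    rw [h0]
    exact Finset.sum_nonneg fun j _ => mul_nonneg (hmu j) (ht0 j)

/- ### Matrix trace helper lemmas -/

lemma hQQ_of {n d : ℕ} (V : Matrix (Fin d) (Fin n) ℝ) (hVV : V * Vᵀ = 1) :
    (1 - Vᵀ * V) * (1 - Vᵀ * V) = 1 - Vᵀ * V := by
  have hPP : (Vᵀ * V) * (Vᵀ * V) = Vᵀ * V := by
    calc (Vᵀ * V) * (Vᵀ * V) = Vᵀ * (V * Vᵀ) * V := by simp only [Matrix.mul_assoc]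
    _ = Vᵀ * V := by rw [hVV]; simp only [Matrix.mul_assoc, Matrix.one_mul]
  have h : ∀ M : Matrix (Fin n) (Fin n) ℝ, (1 - M) * (1 - M) = 1 - M - M + M * M := by
    intro M; noncomm_ring
  rw [h, hPP]
  abel

lemma hQt_of {n d : ℕ} (V : Matrix (Fin d) (Fin n) ℝ) :
    (1 - Vᵀ * V)ᵀ = 1 - Vᵀ * V := by
  rw [Matrix.transpose_sub, Matrix.transpose_one, Matrix.transpose_mul,
    Matrix.transpose_transpose]

lemma split_trace {m n : ℕ} (X : Matrix (Fin m) (Fin n) ℝ) (P : Matrix (Fin n) (Fin n) ℝ) :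
    (X * Xᵀ).trace = (Xᵀ * X * P).trace + (Xᵀ * X * (1 - P)).trace := by
  rw [← Matrix.trace_add, ← Matrix.mul_add,
    show P + (1 - P) = 1 from by abel, Matrix.mul_one, Matrix.trace_mul_comm]

lemma Qpart_nonneg {m n : ℕ} (X : Matrix (Fin m) (Fin n) ℝ) (Q : Matrix (Fin n) (Fin n) ℝ)
    (hQQ : Q * Q = Q) (hQt : Qᵀ = Q) : 0 ≤ (Xᵀ * X * Q).trace := by
  have h1 : (X * Q) * (X * Q)ᵀ = X * Q * Xᵀ := by
    rw [Matrix.transpose_mul, hQt]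
    calc X * Q * (Q * Xᵀ) = X * (Q * Q) * Xᵀ := by simp only [Matrix.mul_assoc]
    _ = X * Q * Xᵀ := by rw [hQQ]
  have h2 : (Xᵀ * X * Q).trace = ((X * Q) * Xᵀ).trace := by
    rw [Matrix.mul_assoc, Matrix.trace_mul_comm]
  rw [h2, ← h1]
  exact trace_self_mul_transpose_nonneg (X * Q)

lemma Ppart_eq {m n d : ℕ} (X A : Matrix (Fin m) (Fin n) ℝ) (U Dg : Matrix (Fin n) (Fin n) ℝ)
    (V : Matrix (Fin d) (Fin n) ℝ) (hXV : X * Vᵀ = A * Vᵀ) (hAA : Aᵀ * A = Uᵀ * Dg * U) :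
    (Xᵀ * X * (Vᵀ * V)).trace = (Dg * ((U * Vᵀ) * (U * Vᵀ)ᵀ)).trace := by
  have h2 : (Xᵀ * X * (Vᵀ * V)).trace = ((X * Vᵀ)ᵀ * (X * Vᵀ)).trace := by
    rw [show Xᵀ * X * (Vᵀ * V) = (Xᵀ * (X * Vᵀ)) * V from by simp only [Matrix.mul_assoc],
        Matrix.trace_mul_comm, Matrix.transpose_mul, Matrix.transpose_transpose]
    simp only [Matrix.mul_assoc]
  rw [h2, hXV, Matrix.transpose_mul, Matrix.transpose_transpose]
  have h3 : (V * Aᵀ) * (A * Vᵀ) = (V * Uᵀ) * (Dg * (U * Vᵀ)) := by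
    calc (V * Aᵀ) * (A * Vᵀ) = V * (Aᵀ * A) * Vᵀ := by simp only [Matrix.mul_assoc]
    _ = V * (Uᵀ * Dg * U) * Vᵀ := by rw [hAA]
    _ = (V * Uᵀ) * (Dg * (U * Vᵀ)) := by simp only [Matrix.mul_assoc]
  rw [show V * Aᵀ * (A * Vᵀ) = (V * Aᵀ) * (A * Vᵀ) from rfl, h3, Matrix.trace_mul_comm]
  simp only [Matrix.transpose_mul, Matrix.transpose_transpose, Matrix.mul_assoc]

lemma tsum_eq {n d : ℕ} (U : Matrix (Fin n) (Fin n) ℝ) (V : Matrix (Fin d) (Fin n) ℝ)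
    (hUtU : Uᵀ * U = 1) (hVV : V * Vᵀ = 1) :
    ((U * Vᵀ) * (U * Vᵀ)ᵀ).trace = (d : ℝ) := by
  rw [Matrix.trace_mul_comm, Matrix.transpose_mul, Matrix.transpose_transpose]
  have h : (V * Uᵀ) * (U * Vᵀ) = 1 := by
    calc (V * Uᵀ) * (U * Vᵀ) = V * (Uᵀ * U) * Vᵀ := by simp only [Matrix.mul_assoc]
    _ = 1 := by rw [hUtU, Matrix.mul_one, hVV]
  rw [h, Matrix.trace_one]
  simp

lemma tj_le_one {n d : ℕ} (U : Matrix (Fin n) (Fin n) ℝ) (V : Matrix (Fin d) (Fin n) ℝ)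
    (hUU : U * Uᵀ = 1) (hVV : V * Vᵀ = 1) (j : Fin n) :
    ((U * Vᵀ) * (U * Vᵀ)ᵀ) j j ≤ 1 := by
  have h3 : (U * (1 - Vᵀ * V)) * (U * (1 - Vᵀ * V))ᵀ
      = U * Uᵀ - (U * Vᵀ) * (U * Vᵀ)ᵀ := by
    rw [Matrix.transpose_mul, hQt_of V]
    calc U * (1 - Vᵀ * V) * ((1 - Vᵀ * V) * Uᵀ)
        = U * ((1 - Vᵀ * V) * (1 - Vᵀ * V)) * Uᵀ := by simp only [Matrix.mul_assoc]
    _ = U * (1 - Vᵀ * V) * Uᵀ := by rw [hQQ_of V hVV]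
    _ = U * Uᵀ - (U * Vᵀ) * (U * Vᵀ)ᵀ := by
        rw [Matrix.mul_sub, Matrix.mul_one, Matrix.sub_mul, Matrix.transpose_mul,
          Matrix.transpose_transpose]
        simp only [Matrix.mul_assoc]
  have h4 : 0 ≤ (U * Uᵀ - (U * Vᵀ) * (U * Vᵀ)ᵀ) j j := by
    rw [← h3]
    exact diag_self_mul_transpose_nonneg _ j
  have h5 : (U * Uᵀ) j j = 1 := by rw [hUU, Matrix.one_apply_eq]
  rw [Matrix.sub_apply, h5] at h4
  linarith

/- ### The core Eckart–Young type lower bound -/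

lemma core_aux {m n d : ℕ} {ι : Type} [Fintype ι]
    (A : Matrix (Fin m) (Fin n) ℝ) (C : Matrix (Fin m) ι ℝ) (N : Matrix ι (Fin n) ℝ)
    (U Dg : Matrix (Fin n) (Fin n) ℝ) (V : Matrix (Fin d) (Fin n) ℝ)
    (μ : ℕ → ℝ)
    (hdesc : ∀ i, 1 ≤ i → i < n → μ (i+1) ≤ μ i)
    (hDg : Dg = Matrix.diagonal (fun j : Fin n => μ ((j:ℕ)+1)))
    (hUU : U * Uᵀ = 1) (hUtU : Uᵀ * U = 1)
    (hAA : Aᵀ * A = Uᵀ * Dg * U)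
    (hVV : V * Vᵀ = 1) (hNV : N * Vᵀ = 0)
    (hd : n ≤ d + Fintype.card ι) :
    ∑ j ∈ Finset.Icc (Fintype.card ι + 1) n, μ j ≤ ((A - C * N) * (A - C * N)ᵀ).trace := by
  have key : ∀ X : Matrix (Fin m) (Fin n) ℝ, X = A - C * N →
      ∑ j ∈ Finset.Icc (Fintype.card ι + 1) n, μ j ≤ (X * Xᵀ).trace := by
    intro X hXdef
    have hXV : X * Vᵀ = A * Vᵀ := by
      rw [hXdef, Matrix.sub_mul, Matrix.mul_assoc, hNV, Matrix.mul_zero, sub_zero]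
    have hmu : ∀ j : Fin n, 0 ≤ μ ((j:ℕ)+1) := by
      intro j
      have h2 : (A * Uᵀ)ᵀ * (A * Uᵀ) = U * (Aᵀ * A) * Uᵀ := by
        rw [Matrix.transpose_mul, Matrix.transpose_transpose]
        simp only [Matrix.mul_assoc]
      have h3 : U * (Aᵀ * A) * Uᵀ = Dg := by
        rw [hAA]
        calc U * (Uᵀ * Dg * U) * Uᵀ = (U * Uᵀ) * Dg * (U * Uᵀ) := by
              simp only [Matrix.mul_assoc]
        _ = Dg := by rw [hUU, Matrix.one_mul, Matrix.mul_one]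
      have h1 : ((A * Uᵀ)ᵀ * (A * Uᵀ)) j j = μ ((j:ℕ)+1) := by
        rw [h2, h3, hDg, Matrix.diagonal_apply_eq]
      rw [← h1]
      exact diag_transpose_mul_self_nonneg _ j
    have hsplit := split_trace X (Vᵀ * V)
    have hQnn := Qpart_nonneg X (1 - Vᵀ * V) (hQQ_of V hVV) (hQt_of V)
    have hPp := Ppart_eq X A U Dg V hXV hAA
    have hdiag : (Dg * ((U * Vᵀ) * (U * Vᵀ)ᵀ)).trace
        = ∑ j : Fin n, μ ((j:ℕ)+1) * (((U * Vᵀ) * (U * Vᵀ)ᵀ) j j) := by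
      rw [hDg, Matrix.trace]
      apply Finset.sum_congr rfl
      intro j _
      rw [Matrix.diag_apply, Matrix.diagonal_mul]
    have htsum : ∑ j : Fin n, (((U * Vᵀ) * (U * Vᵀ)ᵀ) j j) = (d : ℝ) := by
      rw [show (∑ j : Fin n, (((U * Vᵀ) * (U * Vᵀ)ᵀ) j j)) = ((U * Vᵀ) * (U * Vᵀ)ᵀ).trace
        from rfl]
      exact tsum_eq U V hUtU hVV
    have hcomb := comb_ineq μ (fun j => ((U * Vᵀ) * (U * Vᵀ)ᵀ) j j) hdesc hmu
      (fun j => diag_self_mul_transpose_nonneg _ j) (tj_le_one U V hUU hVV) htsum hd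
    calc ∑ j ∈ Finset.Icc (Fintype.card ι + 1) n, μ j
        ≤ ∑ j : Fin n, μ ((j:ℕ)+1) * (((U * Vᵀ) * (U * Vᵀ)ᵀ) j j) := hcomb
    _ = (Xᵀ * X * (Vᵀ * V)).trace := by rw [hPp, hdiag]
    _ ≤ (X * Xᵀ).trace := by rw [hsplit]; linarith
  exact key (A - C * N) rfl

lemma core {m n : ℕ} {ι : Type} [Fintype ι]
    (A : Matrix (Fin m) (Fin n) ℝ) (C : Matrix (Fin m) ι ℝ) (N : Matrix ι (Fin n) ℝ)
    (μ : ℕ → ℝ) (u : Fin n → Fin n → ℝ)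
    (hdesc : ∀ i, 1 ≤ i → i < n → μ (i+1) ≤ μ i)
    (horth : ∀ i j, dotProduct (u i) (u j) = if i = j then 1 else 0)
    (heig : ∀ i : Fin n, (Aᵀ * A).mulVec (u i) = μ ((i:ℕ)+1) • u i) :
    ∑ j ∈ Finset.Icc (Fintype.card ι + 1) n, μ j ≤ ((A - C * N) * (A - C * N)ᵀ).trace := by
  classical
  obtain ⟨d, V, hd, hVV, hNV⟩ := exists_orthonormal_ker N
  have hUU : (Matrix.of u) * (Matrix.of u)ᵀ = 1 := by
    ext i j
    simpa [Matrix.mul_apply, Matrix.one_apply, dotProduct] using horth i j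
  have hUtU : (Matrix.of u)ᵀ * (Matrix.of u) = 1 := mul_eq_one_comm.mp hUU
  have hSU : (Aᵀ * A) * (Matrix.of u)ᵀ
      = (Matrix.of u)ᵀ * (Matrix.diagonal fun j : Fin n => μ ((j:ℕ)+1)) := by
    ext i j
    rw [Matrix.mul_diagonal]
    have h1 := congrFun (heig j) i
    simp only [Matrix.mulVec, dotProduct, Matrix.mul_apply, Pi.smul_apply,
      smul_eq_mul, Matrix.transpose_apply, Matrix.of_apply] at h1 ⊢
    rw [h1]
    ring
  have hAA : Aᵀ * A = (Matrix.of u)ᵀ * (Matrix.diagonal fun j : Fin n => μ ((j:ℕ)+1))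
      * (Matrix.of u) := by
    calc Aᵀ * A = (Aᵀ * A) * ((Matrix.of u)ᵀ * (Matrix.of u)) := by
          rw [hUtU, Matrix.mul_one]
    _ = ((Aᵀ * A) * (Matrix.of u)ᵀ) * (Matrix.of u) := by
          simp only [Matrix.mul_assoc]
    _ = _ := by rw [hSU]
  exact core_aux A C N (Matrix.of u) _ V μ hdesc rfl hUU hUtU hAA hVV hNV hd


/-- `P₁ ∈ ℝ^{a×n}`: selects the first `a` coordinates. -/
def selectFirst (a n : ℕ) : Matrix (Fin a) (Fin n) ℝ :=
  Matrix.of fun i j => if (i : ℕ) = (j : ℕ) then 1 else 0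

/-- `P₂ ∈ ℝ^{b×n}`: selects the last `b` coordinates. -/
def selectLast (b n : ℕ) : Matrix (Fin b) (Fin n) ℝ :=
  Matrix.of fun i j => if (i : ℕ) + (n - b) = (j : ℕ) then 1 else 0

/-- Total loss `L_total = L⁽³⁾ + L⁽⁴⁾` of a coding scheme for the butterfly
network, where `M⁽³⁾` stacks `E¹³P₁` on top of `E⁵⁶ [E¹⁵P₁; E²⁵P₂]` and
`M⁽⁴⁾` stacks `E²⁴P₂` on top of the same middle-edge block, and
`L⁽ⁱ⁾ = Tr (Kⁱ (I - Dⁱ Mⁱ) Ψ (I - Dⁱ Mⁱ)ᵀ Kⁱᵀ)`. -/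
noncomputable def totalLoss {n a b Z m₃ m₄ : ℕ}
    (Ψ : Matrix (Fin n) (Fin n) ℝ)
    (K3 : Matrix (Fin m₃) (Fin n) ℝ) (K4 : Matrix (Fin m₄) (Fin n) ℝ)
    (E13 E15 : Matrix (Fin Z) (Fin a) ℝ) (E24 E25 : Matrix (Fin Z) (Fin b) ℝ)
    (E56 : Matrix (Fin Z) (Fin Z ⊕ Fin Z) ℝ)
    (D3 D4 : Matrix (Fin n) (Fin Z ⊕ Fin Z) ℝ) : ℝ :=
  let P1 := selectFirst a n
  let P2 := selectLast b n
  let mid : Matrix (Fin Z) (Fin n) ℝ := E56 * Matrix.fromRows (E15 * P1) (E25 * P2)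
  let M3 : Matrix (Fin Z ⊕ Fin Z) (Fin n) ℝ := Matrix.fromRows (E13 * P1) mid
  let M4 : Matrix (Fin Z ⊕ Fin Z) (Fin n) ℝ := Matrix.fromRows (E24 * P2) mid
  (K3 * (1 - D3 * M3) * Ψ * (1 - D3 * M3)ᵀ * K3ᵀ).trace +
    (K4 * (1 - D4 * M4) * Ψ * (1 - D4 * M4)ᵀ * K4ᵀ).trace

/-- lower bound for the butterfly-network task-aware coding
problem: every coding scheme has total loss at least
`L_lb = Σ_{i∈{3,4}} Σ_{j=2Z+1}^{n} μ⁽ⁱ⁾_j`, where `μ⁽ⁱ⁾₁ ≥ ⋯ ≥ μ⁽ⁱ⁾_n` are the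
eigenvalues of the Gram matrix `S⁽ⁱ⁾ = Lᵀ K⁽ⁱ⁾ᵀ K⁽ⁱ⁾ L` (1-indexed via
`μ3, μ4 : ℕ → ℝ`, with orthonormal eigenvectors `u3, u4`). -/
theorem butterfly_total_loss_lower_bound
    (n a b Z m₃ m₄ : ℕ)
    (hn : 0 < n) (ha : 0 < a) (hb : 0 < b) (hZ : 0 < Z) (hm₃ : 0 < m₃) (hm₄ : 0 < m₄)
    (hZn : Z ≤ n) (han : a ≤ n) (hbn : b ≤ n) (hnab : n ≤ a + b)
    (Ψ L : Matrix (Fin n) (Fin n) ℝ) (hΨ : Ψ.PosDef) (hChol : Ψ = L * Lᵀ)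
    (hLtri : ∀ i j : Fin n, i < j → L i j = 0) (hLdiag : ∀ i : Fin n, 0 < L i i)
    (K3 : Matrix (Fin m₃) (Fin n) ℝ) (K4 : Matrix (Fin m₄) (Fin n) ℝ)
    (μ3 μ4 : ℕ → ℝ) (u3 u4 : Fin n → (Fin n → ℝ))
    (hdesc3 : ∀ i : ℕ, 1 ≤ i → i < n → μ3 (i + 1) ≤ μ3 i) (hzero3 : μ3 (n + 1) = 0)
    (horth3 : ∀ i j : Fin n, dotProduct (u3 i) (u3 j) = if i = j then 1 else 0)
    (heig3 : ∀ i : Fin n, (Lᵀ * K3ᵀ * K3 * L).mulVec (u3 i) = μ3 ((i : ℕ) + 1) • u3 i)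
    (hdesc4 : ∀ i : ℕ, 1 ≤ i → i < n → μ4 (i + 1) ≤ μ4 i) (hzero4 : μ4 (n + 1) = 0)
    (horth4 : ∀ i j : Fin n, dotProduct (u4 i) (u4 j) = if i = j then 1 else 0)
    (heig4 : ∀ i : Fin n, (Lᵀ * K4ᵀ * K4 * L).mulVec (u4 i) = μ4 ((i : ℕ) + 1) • u4 i) :
    ∀ (E13 E15 : Matrix (Fin Z) (Fin a) ℝ) (E24 E25 : Matrix (Fin Z) (Fin b) ℝ)
      (E56 : Matrix (Fin Z) (Fin Z ⊕ Fin Z) ℝ)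
      (D3 D4 : Matrix (Fin n) (Fin Z ⊕ Fin Z) ℝ),
      totalLoss Ψ K3 K4 E13 E15 E24 E25 E56 D3 D4 ≥
        (∑ j ∈ Finset.Icc (2 * Z + 1) n, μ3 j) +
          (∑ j ∈ Finset.Icc (2 * Z + 1) n, μ4 j) := by
  intro E13 E15 E24 E25 E56 D3 D4
  rw [ge_iff_le]
  simp only [totalLoss]
  have hcard : Fintype.card (Fin Z ⊕ Fin Z) = 2 * Z := by simp [two_mul]
  have main : ∀ (m : ℕ) (K : Matrix (Fin m) (Fin n) ℝ) (D : Matrix (Fin n) (Fin Z ⊕ Fin Z) ℝ)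
      (M : Matrix (Fin Z ⊕ Fin Z) (Fin n) ℝ) (μ : ℕ → ℝ) (u : Fin n → Fin n → ℝ),
      (∀ i, 1 ≤ i → i < n → μ (i+1) ≤ μ i) →
      (∀ i j, dotProduct (u i) (u j) = if i = j then 1 else 0) →
      (∀ i : Fin n, (Lᵀ * Kᵀ * K * L).mulVec (u i) = μ ((i:ℕ)+1) • u i) →
      ∑ j ∈ Finset.Icc (2*Z+1) n, μ j ≤ (K * (1 - D * M) * Ψ * (1 - D * M)ᵀ * Kᵀ).trace := by
    intro m K D M μ u hdesc horth heig
    have hAA : (K * L)ᵀ * (K * L) = Lᵀ * Kᵀ * K * L := by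
      rw [Matrix.transpose_mul]
      simp only [Matrix.mul_assoc]
    have heig' : ∀ i : Fin n, ((K * L)ᵀ * (K * L)).mulVec (u i) = μ ((i:ℕ)+1) • u i := by
      intro i
      rw [hAA]
      exact heig i
    have key := core (K * L) (K * D) (M * L) μ u hdesc horth heig'
    rw [hcard] at key
    have hmat : K * (1 - D * M) * Ψ * (1 - D * M)ᵀ * Kᵀ
        = (K * L - (K * D) * (M * L)) * (K * L - (K * D) * (M * L))ᵀ := by
      rw [hChol]
      simp only [Matrix.transpose_sub, Matrix.transpose_mul, Matrix.transpose_one,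
        Matrix.mul_sub, Matrix.sub_mul, Matrix.mul_one, Matrix.one_mul,
        Matrix.transpose_transpose, Matrix.mul_assoc]
    rw [hmat]
    exact key
  exact add_le_add
    (main m₃ K3 D3 (Matrix.fromRows (E13 * selectFirst a n)
      (E56 * Matrix.fromRows (E15 * selectFirst a n) (E25 * selectLast b n)))
      μ3 u3 hdesc3 horth3 heig3)
    (main m₄ K4 D4 (Matrix.fromRows (E24 * selectLast b n)
      (E56 * Matrix.fromRows (E15 * selectFirst a n) (E25 * selectLast b n)))
      μ4 u4 hdesc4 horth4 heig4)
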